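/- arXiv:2402.13107 — 2 statements merged into one kernel-verified Lean document; each statement's English description precedes it below -/
import Mathlib

section
/- Let k ≥ 2 be an integer, let c > 0 and L > 0 be real numbers, and let B, F : ℕ → ℕ be sequences such that B(n) ≥ 1 for all n ≥ 0, B(n) ≥ F(n) · (B(⌊n/k⌋))^k for all n ≥ k, and F(n) ≥ 2^{c·n² − L·n} for all n ≥ 1. Then there exists a constant C > 0 such that B(n) ≥ 2^{(k/(k−1))·c·n² − C·n·log₂ n} for all n ≥ 2. -/
set_option maxHeartbeats 1000000 in
theorem recursive_counting_scheme (k : ℕ) (hk : 2 ≤ k) (c L : ℝ) (hc : 0 < c) (hL : 0 < L)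
    (B F : ℕ → ℕ)
    (hB : ∀ n : ℕ, 1 ≤ B n)
    (hrec : ∀ n : ℕ, k ≤ n → F n * B (n / k) ^ k ≤ B n)
    (hF : ∀ n : ℕ, 1 ≤ n → (F n : ℝ) ≥ 2 ^ (c * (n : ℝ) ^ 2 - L * (n : ℝ))) :
    ∃ C : ℝ, 0 < C ∧ ∀ n : ℕ, 2 ≤ n →
      (B n : ℝ) ≥
        2 ^ ((k : ℝ) / ((k : ℝ) - 1) * c * (n : ℝ) ^ 2
              - C * (n : ℝ) * Real.logb 2 (n : ℝ)) := by
  have hk1 : (1:ℝ) < (k:ℝ) := by exact_mod_cast Nat.lt_of_lt_of_le one_lt_two hk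
  have hk2 : (2:ℝ) ≤ (k:ℝ) := by exact_mod_cast hk
  have hkm1 : (0:ℝ) < (k:ℝ) - 1 := by linarith
  set α : ℝ := (k:ℝ)/((k:ℝ)-1) with hα
  have hα2 : α ≤ 2 := by rw [hα, div_le_iff₀ hkm1]; linarith
  have hαpos : 0 < α := by rw [hα]; positivity
  have hαK : ((k:ℝ) - 1) * α = (k:ℝ) := by rw [hα]; field_simp
  set C : ℝ := 4*(k:ℝ)*c + 2*c + L with hC
  have hCpos : 0 < C := by positivity
  have hCge : 2*c + L ≤ C := by nlinarith
  refine ⟨C, hCpos, ?_⟩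
  intro n
  induction n using Nat.strong_induction_on with
  | _ n ih =>
  intro hn
  have hn1 : (2:ℝ) ≤ (n:ℝ) := by exact_mod_cast hn
  have hlogn : 1 ≤ Real.logb 2 (n:ℝ) := by
    rw [show (1:ℝ) = Real.logb 2 2 from (Real.logb_self_eq_one one_lt_two).symm]
    exact Real.logb_le_logb_of_le one_lt_two two_pos hn1
  by_cases hcase : n < 2*k
  · -- base case
    have hnlt : (n:ℝ) < 2*(k:ℝ) := by exact_mod_cast hcase
    have h1 : α*c*(n:ℝ) ≤ C := by
      have w1 := mul_nonneg (mul_nonneg (sub_nonneg.2 hα2) hc.le) (by linarith : (0:ℝ) ≤ (n:ℝ))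
      have w2 := mul_lt_mul_of_pos_left hnlt hc
      nlinarith [w1, w2]
    have hexp : α*c*(n:ℝ)^2 - C*(n:ℝ)*Real.logb 2 (n:ℝ) ≤ 0 := by
      have w1 := mul_le_mul_of_nonneg_right h1 (by linarith : (0:ℝ) ≤ (n:ℝ))
      have w2 := mul_le_mul_of_nonneg_left hlogn (mul_nonneg hCpos.le (by linarith : (0:ℝ) ≤ (n:ℝ)))
      nlinarith [w1, w2]
    calc (2:ℝ) ^ (α*c*(n:ℝ)^2 - C*(n:ℝ)*Real.logb 2 (n:ℝ))
        ≤ (2:ℝ) ^ (0:ℝ) := Real.rpow_le_rpow_of_exponent_le one_le_two hexp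
      _ = 1 := Real.rpow_zero 2
      _ ≤ (B n : ℝ) := by exact_mod_cast hB n
  · -- inductive step
    push_neg at hcase
    set m := n / k with hm
    have hkpos : 0 < k := by omega
    have hm2 : 2 ≤ m := (Nat.le_div_iff_mul_le hkpos).2 (by omega)
    have hmlt : m < n := Nat.div_lt_self (by omega) (by omega)
    have hdm : k * m + n % k = n := Nat.div_add_mod n k
    have hmod : n % k < k := Nat.mod_lt n hkpos
    have hkmn : (k:ℝ)*(m:ℝ) ≤ (n:ℝ) := by exact_mod_cast (by omega : k*m ≤ n)
    have hnub : (n:ℝ) ≤ (k:ℝ)*(m:ℝ) + ((k:ℝ) - 1) := by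
      have : n ≤ k*m + (k-1) := by omega
      have := (Nat.cast_le (α := ℝ)).2 this
      push_cast at this
      rw [Nat.cast_sub (by omega : 1 ≤ k)] at *
      push_cast at this ⊢
      linarith
    have hmR : (2:ℝ) ≤ (m:ℝ) := by exact_mod_cast hm2
    have hlogm : 1 ≤ Real.logb 2 (m:ℝ) := by
      rw [show (1:ℝ) = Real.logb 2 2 from (Real.logb_self_eq_one one_lt_two).symm]
      exact Real.logb_le_logb_of_le one_lt_two two_pos hmR
    have hlogk : 1 ≤ Real.logb 2 (k:ℝ) := by
      rw [show (1:ℝ) = Real.logb 2 2 from (Real.logb_self_eq_one one_lt_two).symm]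
      exact Real.logb_le_logb_of_le one_lt_two two_pos hk2
    have hlogmn : Real.logb 2 (m:ℝ) ≤ Real.logb 2 (n:ℝ) - Real.logb 2 (k:ℝ) := by
      rw [← Real.logb_div (by linarith : (n:ℝ) ≠ 0) (by linarith : (k:ℝ) ≠ 0)]
      apply Real.logb_le_logb_of_le one_lt_two (by linarith)
      rw [le_div_iff₀ (by linarith : (0:ℝ) < (k:ℝ))]
      linarith [hkmn]
    -- abbreviations
    set N := (n:ℝ)
    set M := (m:ℝ)
    set K := (k:ℝ)
    set Ln := Real.logb 2 N
    set Lm := Real.logb 2 M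
    set lk := Real.logb 2 K
    -- key scaled inequality
    have hKM0 : (0:ℝ) ≤ K*M := by positivity
    have s1 : N^2 - K^2*M^2 ≤ (K-1)*(2*N) := by
      have h := mul_le_mul (by linarith : N - K*M ≤ K - 1) (by linarith : N + K*M ≤ 2*N)
        (by linarith : (0:ℝ) ≤ N + K*M) hkm1.le
      nlinarith [h]
    have s2 : C*(K*M*Lm) ≤ C*(N*Ln - N*lk) := by
      apply mul_le_mul_of_nonneg_left _ hCpos.le
      calc K*M*Lm ≤ N*Lm := mul_le_mul_of_nonneg_right hkmn (by linarith : (0:ℝ) ≤ Lm)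
        _ ≤ N*(Ln - lk) := mul_le_mul_of_nonneg_left hlogmn (by linarith)
        _ = N*Ln - N*lk := by ring
    have g1 : c*(N^2 - K^2*M^2) + (K-1)*(L*N) ≤ (K-1)*(C*N*Ln - K*C*M*Lm) := by
      have t1 : c*(N^2 - K^2*M^2) ≤ c*((K-1)*(2*N)) := mul_le_mul_of_nonneg_left s1 hc.le
      have t2 : C*N*lk ≤ C*N*Ln - K*C*M*Lm := by linarith [s2]
      have t3 : C*N ≤ C*N*lk := by
        have := mul_le_mul_of_nonneg_left hlogk (mul_nonneg hCpos.le (by linarith : (0:ℝ) ≤ N))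
        linarith
      have t4 : (2*c + L)*N ≤ C*N := mul_le_mul_of_nonneg_right hCge (by linarith)
      have u2 := mul_le_mul_of_nonneg_left t2 hkm1.le
      have u3 := mul_le_mul_of_nonneg_left t3 hkm1.le
      have u4 := mul_le_mul_of_nonneg_left t4 hkm1.le
      linarith [t1, u2, u3, u4]
    have hexp : α*c*N^2 - C*N*Ln ≤ (c*N^2 - L*N) + (α*c*M^2 - C*M*Lm)*K := by
      have h2 : 0 ≤ ((c*N^2 - L*N) + (α*c*M^2 - C*M*Lm)*K - (α*c*N^2 - C*N*Ln)) * (K-1) := by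
        have expand : ((c*N^2 - L*N) + (α*c*M^2 - C*M*Lm)*K - (α*c*N^2 - C*N*Ln)) * (K-1)
            = ((K-1)*(C*N*Ln - K*C*M*Lm)) - (c*(N^2 - K^2*M^2) + (K-1)*(L*N)) := by
          linear_combination (K*c*M^2 - c*N^2) * hαK
        rw [expand]
        linarith [g1]
      have h3 := (mul_nonneg_iff_of_pos_right hkm1).1 h2
      linarith [h3]
    -- combine
    have hIH := ih m hmlt hm2
    have hFn := hF n (by omega)
    have hb1 : ((F n : ℝ)) * ((B m:ℝ))^k ≤ (B n : ℝ) := by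
      exact_mod_cast hrec n (by omega)
    have hb2 : (2:ℝ)^(c*N^2 - L*N) * ((2:ℝ)^(α*c*M^2 - C*M*Lm))^(k:ℕ)
        ≤ (F n:ℝ) * ((B m:ℝ))^k := by
      apply mul_le_mul hFn (pow_le_pow_left₀ (by positivity) hIH k) (by positivity)
        (le_trans (by positivity) hFn)
    calc (2:ℝ) ^ (α*c*N^2 - C*N*Ln)
        ≤ (2:ℝ) ^ ((c*N^2 - L*N) + (α*c*M^2 - C*M*Lm)*K) :=
          Real.rpow_le_rpow_of_exponent_le one_le_two hexp
      _ = (2:ℝ)^(c*N^2 - L*N) * ((2:ℝ)^(α*c*M^2 - C*M*Lm))^(k:ℕ) := by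
          rw [Real.rpow_add two_pos, Real.rpow_mul (by norm_num : (0:ℝ) ≤ 2),
            Real.rpow_natCast]
      _ ≤ (F n:ℝ) * ((B m:ℝ))^k := hb2
      _ ≤ (B n : ℝ) := hb1
end

section
/- (Lindström–Gessel–Viennot lemma.) Let V be a finite type and R : V → V → Prop a relation whose transitive closure is irreflexive (i.e., (V, R) is a finite directed acyclic graph). For u, v ∈ V let p(u, v) denote the number of directed paths from u to v. Let r ≥ 1 and let s, e : Fin r → V. Assume that for every r-tuple (P_1, …, P_r) of pairwise vertex-disjoint directed paths such that P_i starts at s_i for each i and such that there is a permutation σ of Fin r with P_i ending at e_{σ(i)} for each i, necessarily σ is the identity. Then the number of r-tuples (P_1, …, P_r) of pairwise vertex-disjoint directed paths with P_i going from s_i to e_i equals the determinant of the r × r integer matrix whose (i, j) entry is p(s_i, e_j). -/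
/-- `IsPath R u v p` : the nonempty list `p` of vertices is a directed path from `u`
to `v` in the digraph with edge relation `R`. Paths of length `0` (i.e. `p = [u]`,
`u = v`) are allowed. -/
def IsPath {V : Type*} (R : V → V → Prop) (u v : V) (p : List V) : Prop :=
  p ≠ [] ∧ p.head? = some u ∧ p.getLast? = some v ∧ p.Chain' R

/-- The number of directed paths from `u` to `v`. -/
noncomputable def pathCount {V : Type*} (R : V → V → Prop) (u v : V) : ℕ :=
  Nat.card {p : List V // IsPath R u v p}

namespace LGVproof
open List Finset
open scoped Classical

variable {V : Type*} {R : V → V → Prop}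

lemma isPath_nodup (hacyclic : ∀ v : V, ¬ Relation.TransGen R v v)
    {u v : V} {p : List V} (h : IsPath R u v p) : p.Nodup := by
  by_contra hnd
  obtain ⟨x, hx⟩ := List.exists_duplicate_iff_not_nodup.mpr hnd
  have hsub : [x, x].Sublist p := List.duplicate_iff_sublist.mp hx
  have hch : p.Chain' (Relation.TransGen R) :=
    h.2.2.2.imp fun _ _ hab => Relation.TransGen.single hab
  have := hch.sublist hsub
  exact hacyclic x (List.isChain_pair.mp this)

lemma isPath_splice {a b c d : V} {p q : List V} {k l : ℕ}
    (hp : IsPath R a b p) (hq : IsPath R c d q)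
    (hk : k < p.length) (hl : l < q.length) (hv : p[k] = q[l]) :
    IsPath R a d (p.take (k+1) ++ q.drop (l+1)) := by
  obtain ⟨hpne, hph, hpl, hpc⟩ := hp
  obtain ⟨hqne, hqh, hql, hqc⟩ := hq
  have hlt : (p.take (k+1)).length = k+1 := by simp; omega
  refine ⟨?_, ?_, ?_, ?_⟩
  · intro hcon
    have := congrArg List.length hcon
    simp [hlt] at this
  · rw [List.head?_eq_getElem?] at hph ⊢
    rw [List.getElem?_append]
    simp only [hlt]
    rw [if_pos (by omega), List.getElem?_take, if_pos (by omega)]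
    exact hph
  · by_cases hdq : l + 1 < q.length
    · have hne' : q.drop (l+1) ≠ [] := by
        intro hcon; have := congrArg List.length hcon; simp at this; omega
      have h1 : (q.drop (l+1)).getLast? = some d := by
        rw [List.getLast?_eq_getElem?, List.getElem?_drop,
          show l+1 + ((q.drop (l+1)).length - 1) = q.length - 1 by simp; omega,
          ← List.getLast?_eq_getElem?]
        exact hql
      rw [List.getLast?_append, h1]
      rfl
    · have hdq' : q.drop (l+1) = [] := List.drop_eq_nil_of_le (by omega)
      rw [hdq', List.append_nil, List.getLast?_eq_getElem?, hlt]
      simp only [Nat.add_sub_cancel]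
      rw [List.getElem?_take, if_pos (Nat.lt_succ_self k), List.getElem?_eq_getElem hk, hv]
      rw [List.getLast?_eq_getElem?, List.getElem?_eq_getElem (by omega)] at hql
      have hleq : q[l] = q[q.length - 1] := by congr 1; omega
      rw [hleq]
      exact hql
  · rw [List.Chain', List.isChain_append]
    refine ⟨hpc.take _, hqc.drop _, ?_⟩
    intro x hx y hy
    have hdne : q.drop (l+1) ≠ [] := by
      intro hcon; rw [hcon] at hy; simp at hy
    have hdl : l + 1 < q.length := by
      by_contra hcon
      exact hdne (List.drop_eq_nil_of_le (by omega))
    -- x = p[k]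
    have hxv : x = p[k] := by
      rw [List.getLast?_eq_getElem?, hlt, List.getElem?_take] at hx
      rw [if_pos (by omega)] at hx
      rw [List.getElem?_eq_getElem (by omega)] at hx
      simpa using hx.symm
    have hyv : y = q[l+1] := by
      rw [List.head?_eq_getElem?, List.getElem?_drop] at hy
      rw [List.getElem?_eq_getElem (by omega)] at hy
      simpa using hy.symm
    subst hxv hyv
    rw [hv]
    have := List.isChain_iff_getElem.mp hqc l (by omega)
    simpa using this

variable {r : ℕ}

/-- `Cross P i` : path `i` meets some other path. -/
def Cross (P : Fin r → List V) (i : Fin r) : Prop :=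
  ∃ j, j ≠ i ∧ ∃ w, w ∈ P i ∧ w ∈ P j

noncomputable def i0 (P : Fin r → List V) (h : ∃ i, Cross P i) : Fin r :=
  (Finset.univ.filter (Cross P)).min'
    (by obtain ⟨i, hi⟩ := h; exact ⟨i, by simp [hi]⟩)

lemma cross_i0 (P : Fin r → List V) (h : ∃ i, Cross P i) : Cross P (i0 P h) := by
  have := Finset.min'_mem (Finset.univ.filter (Cross P))
    (by obtain ⟨i, hi⟩ := h; exact ⟨i, by simp [hi]⟩)
  simpa [i0] using this

lemma i0_le (P : Fin r → List V) (h : ∃ i, Cross P i) {i : Fin r} (hi : Cross P i) :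
    i0 P h ≤ i :=
  Finset.min'_le _ _ (by simp [hi])

noncomputable def kIdx (P : Fin r → List V) (h : ∃ i, Cross P i) : ℕ :=
  (P (i0 P h)).findIdx (fun w => decide (∃ j, j ≠ i0 P h ∧ w ∈ P j))

lemma kIdx_lt (P : Fin r → List V) (h : ∃ i, Cross P i) :
    kIdx P h < (P (i0 P h)).length := by
  apply List.findIdx_lt_length_of_exists
  obtain ⟨j, hj, w, hwi, hwj⟩ := cross_i0 P h
  exact ⟨w, hwi, by simp only [decide_eq_true_eq]; exact ⟨j, hj, hwj⟩⟩

noncomputable def vtx (P : Fin r → List V) (h : ∃ i, Cross P i) : V :=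
  (P (i0 P h))[kIdx P h]'(kIdx_lt P h)

lemma vtx_mem_i0 (P : Fin r → List V) (h : ∃ i, Cross P i) : vtx P h ∈ P (i0 P h) :=
  List.getElem_mem _

lemma vtx_cross (P : Fin r → List V) (h : ∃ i, Cross P i) :
    ∃ j, j ≠ i0 P h ∧ vtx P h ∈ P j := by
  have := List.findIdx_getElem (p := fun w => decide (∃ j, j ≠ i0 P h ∧ w ∈ P j))
    (xs := P (i0 P h)) (w := kIdx_lt P h)
  exact of_decide_eq_true this

lemma vtx_first (P : Fin r → List V) (h : ∃ i, Cross P i) {m : ℕ} (hm : m < kIdx P h)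
    {j : Fin r} (hj : j ≠ i0 P h) :
    (P (i0 P h))[m]'(lt_trans hm (kIdx_lt P h)) ∉ P j := by
  have := List.not_of_lt_findIdx (p := fun w => decide (∃ j, j ≠ i0 P h ∧ w ∈ P j))
    (xs := P (i0 P h)) (i := m) hm
  simp only [decide_eq_false_iff_not, not_exists, not_and] at this
  exact this j hj

noncomputable def j0 (P : Fin r → List V) (h : ∃ i, Cross P i) : Fin r :=
  (Finset.univ.filter fun j => j ≠ i0 P h ∧ vtx P h ∈ P j).min'
    (by obtain ⟨j, hj1, hj2⟩ := vtx_cross P h; exact ⟨j, by simp [hj1, hj2]⟩)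

lemma j0_spec (P : Fin r → List V) (h : ∃ i, Cross P i) :
    j0 P h ≠ i0 P h ∧ vtx P h ∈ P (j0 P h) := by
  have := Finset.min'_mem (Finset.univ.filter fun j => j ≠ i0 P h ∧ vtx P h ∈ P j)
    (by obtain ⟨j, hj1, hj2⟩ := vtx_cross P h; exact ⟨j, by simp [hj1, hj2]⟩)
  simpa [j0] using this

lemma j0_ne (P : Fin r → List V) (h : ∃ i, Cross P i) : j0 P h ≠ i0 P h :=
  (j0_spec P h).1

lemma vtx_mem_j0 (P : Fin r → List V) (h : ∃ i, Cross P i) : vtx P h ∈ P (j0 P h) :=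
  (j0_spec P h).2

lemma j0_le (P : Fin r → List V) (h : ∃ i, Cross P i) {j : Fin r}
    (hj : j ≠ i0 P h) (hv : vtx P h ∈ P j) : j0 P h ≤ j :=
  Finset.min'_le _ _ (by simp [hj, hv])

lemma i0_lt_j0 (P : Fin r → List V) (h : ∃ i, Cross P i) : i0 P h < j0 P h := by
  have hle : i0 P h ≤ j0 P h :=
    i0_le P h ⟨i0 P h, Ne.symm (j0_ne P h), vtx P h, vtx_mem_j0 P h, vtx_mem_i0 P h⟩
  exact lt_of_le_of_ne hle (fun hc => j0_ne P h hc.symm)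

noncomputable def lIdx (P : Fin r → List V) (h : ∃ i, Cross P i) : ℕ :=
  (P (j0 P h)).findIdx (fun w => decide (w = vtx P h))

lemma lIdx_lt (P : Fin r → List V) (h : ∃ i, Cross P i) :
    lIdx P h < (P (j0 P h)).length :=
  List.findIdx_lt_length_of_exists ⟨vtx P h, vtx_mem_j0 P h, by simp⟩

lemma getElem_lIdx (P : Fin r → List V) (h : ∃ i, Cross P i) :
    (P (j0 P h))[lIdx P h]'(lIdx_lt P h) = vtx P h := by
  have := List.findIdx_getElem (p := fun w => decide (w = vtx P h))
    (xs := P (j0 P h)) (w := lIdx_lt P h)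
  exact of_decide_eq_true this

lemma lIdx_first (P : Fin r → List V) (h : ∃ i, Cross P i) {m : ℕ} (hm : m < lIdx P h) :
    (P (j0 P h))[m]'(lt_trans hm (lIdx_lt P h)) ≠ vtx P h := by
  have := List.not_of_lt_findIdx (p := fun w => decide (w = vtx P h))
    (xs := P (j0 P h)) (i := m) hm
  simpa using this

noncomputable def swapP (P : Fin r → List V) (h : ∃ i, Cross P i) : Fin r → List V :=
  Function.update (Function.update P (i0 P h)
      ((P (i0 P h)).take (kIdx P h + 1) ++ (P (j0 P h)).drop (lIdx P h + 1)))
    (j0 P h)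
    ((P (j0 P h)).take (lIdx P h + 1) ++ (P (i0 P h)).drop (kIdx P h + 1))

lemma swapP_i0 (P : Fin r → List V) (h : ∃ i, Cross P i) :
    swapP P h (i0 P h) =
      (P (i0 P h)).take (kIdx P h + 1) ++ (P (j0 P h)).drop (lIdx P h + 1) := by
  rw [swapP, Function.update_of_ne (j0_ne P h).symm, Function.update_self]

lemma swapP_j0 (P : Fin r → List V) (h : ∃ i, Cross P i) :
    swapP P h (j0 P h) =
      (P (j0 P h)).take (lIdx P h + 1) ++ (P (i0 P h)).drop (kIdx P h + 1) := by
  rw [swapP, Function.update_self]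

lemma swapP_other (P : Fin r → List V) (h : ∃ i, Cross P i) {m : Fin r}
    (h1 : m ≠ i0 P h) (h2 : m ≠ j0 P h) : swapP P h m = P m := by
  rw [swapP, Function.update_of_ne h2, Function.update_of_ne h1]

lemma mem_swapP (P : Fin r → List V) (h : ∃ i, Cross P i) {w : V} {m : Fin r}
    (hw : w ∈ swapP P h m) : w ∈ P m ∨ w ∈ P (i0 P h) ∨ w ∈ P (j0 P h) := by
  by_cases h1 : m = i0 P h
  · subst h1; rw [swapP_i0] at hw
    rcases List.mem_append.mp hw with hw | hw
    · exact Or.inr (Or.inl (((List.take_sublist _ _).mem hw)))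
    · exact Or.inr (Or.inr (((List.drop_sublist _ _).mem hw)))
  · by_cases h2 : m = j0 P h
    · subst h2; rw [swapP_j0] at hw
      rcases List.mem_append.mp hw with hw | hw
      · exact Or.inr (Or.inr (((List.take_sublist _ _).mem hw)))
      · exact Or.inr (Or.inl (((List.drop_sublist _ _).mem hw)))
    · rw [swapP_other P h h1 h2] at hw; exact Or.inl hw

lemma vtx_mem_swapP_i0 (P : Fin r → List V) (h : ∃ i, Cross P i) :
    vtx P h ∈ swapP P h (i0 P h) := by
  rw [swapP_i0]
  apply List.mem_append.mpr
  left
  have hlen : kIdx P h < ((P (i0 P h)).take (kIdx P h + 1)).length := by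
    simp only [List.length_take]
    have := kIdx_lt P h; omega
  have : ((P (i0 P h)).take (kIdx P h + 1))[kIdx P h]'hlen = vtx P h := by
    rw [List.getElem_take]; rfl
  rw [← this]
  exact List.getElem_mem _

lemma vtx_mem_swapP_j0 (P : Fin r → List V) (h : ∃ i, Cross P i) :
    vtx P h ∈ swapP P h (j0 P h) := by
  rw [swapP_j0]
  apply List.mem_append.mpr
  left
  have hlen : lIdx P h < ((P (j0 P h)).take (lIdx P h + 1)).length := by
    simp only [List.length_take]
    have := lIdx_lt P h; omega
  have : ((P (j0 P h)).take (lIdx P h + 1))[lIdx P h]'hlen = vtx P h := by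
    rw [List.getElem_take]; exact getElem_lIdx P h
  rw [← this]
  exact List.getElem_mem _

lemma cross_swapP (P : Fin r → List V) (h : ∃ i, Cross P i) :
    Cross (swapP P h) (i0 P h) :=
  ⟨j0 P h, j0_ne P h, vtx P h, vtx_mem_swapP_i0 P h, vtx_mem_swapP_j0 P h⟩

lemma i0_swap (P : Fin r → List V) (h : ∃ i, Cross P i) (h' : ∃ i, Cross (swapP P h) i) :
    i0 (swapP P h) h' = i0 P h := by
  apply _root_.le_antisymm
  · exact i0_le (swapP P h) h' (cross_swapP P h)
  · by_contra hcon
    push_neg at hcon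
    obtain ⟨j, hj, w, hwi, hwj⟩ := cross_i0 (swapP P h) h'
    set i' := i0 (swapP P h) h' with hi'
    have hne1 : i' ≠ i0 P h := ne_of_lt hcon
    have hne2 : i' ≠ j0 P h := ne_of_lt (lt_trans hcon (i0_lt_j0 P h))
    rw [swapP_other P h hne1 hne2] at hwi
    have hcross : Cross P i' := by
      rcases mem_swapP P h hwj with hw | hw | hw
      · exact ⟨j, hj, w, hwi, hw⟩
      · exact ⟨i0 P h, hne1.symm, w, hwi, hw⟩
      · exact ⟨j0 P h, hne2.symm, w, hwi, hw⟩
    exact absurd (i0_le P h hcross) (not_le.mpr hcon)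

lemma kIdx_swap (P : Fin r → List V) (h : ∃ i, Cross P i)
    (h' : ∃ i, Cross (swapP P h) i) (hnd : (P (i0 P h)).Nodup) :
    kIdx (swapP P h) h' = kIdx P h := by
  conv_lhs => rw [kIdx, i0_swap P h h', swapP_i0 P h]
  have hlen : kIdx P h <
      ((P (i0 P h)).take (kIdx P h + 1) ++ (P (j0 P h)).drop (lIdx P h + 1)).length := by
    simp only [List.length_append, List.length_take]
    have := kIdx_lt P h; omega
  have hlt : kIdx P h < ((P (i0 P h)).take (kIdx P h + 1)).length := by
    simp only [List.length_take]; have := kIdx_lt P h; omega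
  rw [List.findIdx_eq hlen]
  constructor
  · rw [List.getElem_append_left hlt, List.getElem_take]
    simp only [decide_eq_true_eq]
    exact ⟨j0 P h, j0_ne P h, vtx_mem_swapP_j0 P h⟩
  · intro m hm
    have hm' : m < ((P (i0 P h)).take (kIdx P h + 1)).length := by
      simp only [List.length_take]; have := kIdx_lt P h; omega
    rw [List.getElem_append_left hm', List.getElem_take]
    simp only [decide_eq_false_iff_not, not_exists, not_and]
    intro j hj hwj
    rcases eq_or_ne j (j0 P h) with hjj | hjj
    · subst hjj
      rw [swapP_j0] at hwj
      rcases List.mem_append.mp hwj with hw | hw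
      · exact vtx_first P h hm (j0_ne P h) ((List.take_sublist _ _).mem hw)
      · obtain ⟨t, ht, hteq⟩ := List.mem_iff_getElem.mp hw
        rw [List.getElem_drop] at hteq
        have : kIdx P h + 1 + t = m := hnd.getElem_inj_iff.mp hteq
        omega
    · rw [swapP_other P h hj hjj] at hwj
      exact vtx_first P h hm hj hwj

lemma vtx_swap (P : Fin r → List V) (h : ∃ i, Cross P i)
    (h' : ∃ i, Cross (swapP P h) i) (hnd : (P (i0 P h)).Nodup) :
    vtx (swapP P h) h' = vtx P h := by
  have hlt : kIdx P h < ((P (i0 P h)).take (kIdx P h + 1)).length := by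
    simp only [List.length_take]; have := kIdx_lt P h; omega
  simp only [vtx, i0_swap P h h', kIdx_swap P h h' hnd, swapP_i0 P h]
  rw [List.getElem_append_left hlt, List.getElem_take]

lemma j0_swap (P : Fin r → List V) (h : ∃ i, Cross P i)
    (h' : ∃ i, Cross (swapP P h) i) (hnd : (P (i0 P h)).Nodup) :
    j0 (swapP P h) h' = j0 P h := by
  apply _root_.le_antisymm
  · apply j0_le (swapP P h) h'
    · rw [i0_swap P h h']; exact j0_ne P h
    · rw [vtx_swap P h h' hnd]; exact vtx_mem_swapP_j0 P h
  · have hspec := j0_spec (swapP P h) h'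
    rw [i0_swap P h h', vtx_swap P h h' hnd] at hspec
    rcases eq_or_ne (j0 (swapP P h) h') (j0 P h) with hj | hj
    · exact le_of_eq hj.symm
    · apply j0_le P h hspec.1
      rw [swapP_other P h hspec.1 hj] at hspec
      exact hspec.2

lemma lIdx_swap (P : Fin r → List V) (h : ∃ i, Cross P i)
    (h' : ∃ i, Cross (swapP P h) i) (hnd : (P (i0 P h)).Nodup) :
    lIdx (swapP P h) h' = lIdx P h := by
  conv_lhs => rw [lIdx, j0_swap P h h' hnd, vtx_swap P h h' hnd, swapP_j0 P h]
  have hlen : lIdx P h <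
      ((P (j0 P h)).take (lIdx P h + 1) ++ (P (i0 P h)).drop (kIdx P h + 1)).length := by
    simp only [List.length_append, List.length_take]
    have := lIdx_lt P h; omega
  have hlt : lIdx P h < ((P (j0 P h)).take (lIdx P h + 1)).length := by
    simp only [List.length_take]; have := lIdx_lt P h; omega
  rw [List.findIdx_eq hlen]
  constructor
  · rw [List.getElem_append_left hlt, List.getElem_take]
    simp only [decide_eq_true_eq]
    exact getElem_lIdx P h
  · intro m hm
    have hm' : m < ((P (j0 P h)).take (lIdx P h + 1)).length := by
      simp only [List.length_take]; have := lIdx_lt P h; omega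
    rw [List.getElem_append_left hm', List.getElem_take]
    simp only [decide_eq_false_iff_not]
    exact lIdx_first P h hm

lemma swapP_swapP (P : Fin r → List V) (h : ∃ i, Cross P i)
    (h' : ∃ i, Cross (swapP P h) i) (hnd : (P (i0 P h)).Nodup) :
    swapP (swapP P h) h' = P := by
  have hkl : ((P (i0 P h)).take (kIdx P h + 1)).length = kIdx P h + 1 := by
    simp only [List.length_take]; have := kIdx_lt P h; omega
  have hll : ((P (j0 P h)).take (lIdx P h + 1)).length = lIdx P h + 1 := by
    simp only [List.length_take]; have := lIdx_lt P h; omega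
  funext m
  rcases eq_or_ne m (i0 P h) with hm1 | hm1
  · subst hm1
    have := swapP_i0 (swapP P h) h'
    rw [i0_swap P h h', kIdx_swap P h h' hnd, j0_swap P h h' hnd, lIdx_swap P h h' hnd,
      swapP_i0 P h, swapP_j0 P h] at this
    rw [this, List.take_left' hkl, List.drop_left' hll, List.take_append_drop]
  · rcases eq_or_ne m (j0 P h) with hm2 | hm2
    · subst hm2
      have := swapP_j0 (swapP P h) h'
      rw [i0_swap P h h', kIdx_swap P h h' hnd, j0_swap P h h' hnd, lIdx_swap P h h' hnd,
        swapP_i0 P h, swapP_j0 P h] at this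
      rw [this, List.take_left' hll, List.drop_left' hkl, List.take_append_drop]
    · have h1 : m ≠ i0 (swapP P h) h' := by rw [i0_swap P h h']; exact hm1
      have h2 : m ≠ j0 (swapP P h) h' := by rw [j0_swap P h h' hnd]; exact hm2
      rw [swapP_other (swapP P h) h' h1 h2, swapP_other P h hm1 hm2]

lemma isPath_swapP {s e : Fin r → V} {σ : Equiv.Perm (Fin r)}
    (P : Fin r → List V) (h : ∃ i, Cross P i)
    (hp : ∀ i, IsPath R (s i) (e (σ i)) (P i)) :
    ∀ i, IsPath R (s i) (e ((σ * Equiv.swap (i0 P h) (j0 P h)) i)) (swapP P h i) := by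
  intro i
  have hv : (P (i0 P h))[kIdx P h]'(kIdx_lt P h) = (P (j0 P h))[lIdx P h]'(lIdx_lt P h) :=
    (getElem_lIdx P h).symm
  rcases eq_or_ne i (i0 P h) with h1 | h1
  · subst h1
    rw [swapP_i0 P h]
    have : (σ * Equiv.swap (i0 P h) (j0 P h)) (i0 P h) = σ (j0 P h) := by
      simp [Equiv.Perm.mul_apply]
    rw [this]
    exact isPath_splice (hp _) (hp _) (kIdx_lt P h) (lIdx_lt P h) hv
  · rcases eq_or_ne i (j0 P h) with h2 | h2
    · subst h2
      rw [swapP_j0 P h]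
      have : (σ * Equiv.swap (i0 P h) (j0 P h)) (j0 P h) = σ (i0 P h) := by
        simp [Equiv.Perm.mul_apply]
      rw [this]
      exact isPath_splice (hp _) (hp _) (lIdx_lt P h) (kIdx_lt P h) hv.symm
    · rw [swapP_other P h h1 h2]
      have : (σ * Equiv.swap (i0 P h) (j0 P h)) i = σ i := by
        simp [Equiv.Perm.mul_apply, Equiv.swap_apply_of_ne_of_ne h1 h2]
      rw [this]
      exact hp i

end LGVproof

open Finset LGVproof in
/-- The Lindström–Gessel–Viennot lemma. -/
theorem lindstrom_gessel_viennot {V : Type*} [Fintype V] (R : V → V → Prop)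
    (hacyclic : ∀ v : V, ¬ Relation.TransGen R v v)
    (r : ℕ) (hr : 1 ≤ r) (s e : Fin r → V)
    (hcompat : ∀ (P : Fin r → List V) (σ : Equiv.Perm (Fin r)),
      (∀ i, IsPath R (s i) (e (σ i)) (P i)) →
      (∀ i j, i ≠ j → ∀ v, v ∈ P i → v ∉ P j) → σ = 1) :
    (Nat.card {P : Fin r → List V //
        (∀ i, IsPath R (s i) (e i) (P i)) ∧
        (∀ i j, i ≠ j → ∀ v, v ∈ P i → v ∉ P j)} : ℤ) =
      Matrix.det (Matrix.of fun i j : Fin r => (pathCount R (s i) (e j) : ℤ)) := by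
  classical
  -- path sets are finite
  have hfin : ∀ u v : V, {p : List V | IsPath R u v p}.Finite := fun u v =>
    (List.finite_length_le V (Fintype.card V)).subset
      (fun p hp => (isPath_nodup hacyclic hp).length_le_card)
  set Pset : V → V → Finset (List V) := fun u v => (hfin u v).toFinset with hPset
  have hPmem : ∀ u v p, p ∈ Pset u v ↔ IsPath R u v p := fun u v p => by
    simp [hPset]
  have hcount : ∀ u v : V, pathCount R u v = (Pset u v).card := fun u v => by
    rw [pathCount,
      Nat.card_congr (Equiv.subtypeEquivRight fun p => (hPmem u v p).symm),
      Nat.card_eq_finsetCard]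
  set F : Equiv.Perm (Fin r) → Finset (Fin r → List V) :=
    fun σ => Fintype.piFinset fun i => Pset (s i) (e (σ i)) with hFdef
  have hFmem : ∀ σ P, P ∈ F σ ↔ ∀ i, IsPath R (s i) (e (σ i)) (P i) := fun σ P => by
    simp [hFdef, Fintype.mem_piFinset, hPmem]
  set Disj : (Fin r → List V) → Prop :=
    fun P => ∀ i j, i ≠ j → ∀ v, v ∈ P i → v ∉ P j with hDisjdef
  have hDisjNeg : ∀ P, ¬ Disj P ↔ ∃ i, Cross P i := fun P => by
    constructor
    · intro hd
      by_contra hc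
      push_neg at hc
      refine absurd (fun i j hij v hvi hvj => ?_) hd
      exact hc i ⟨j, hij.symm, v, hvi, hvj⟩
    · rintro ⟨i, j, hji, w, hwi, hwj⟩ hd
      exact hd i j hji.symm w hwi hwj
  -- determinant expansion
  have hdet : (Matrix.of fun i j : Fin r => (pathCount R (s i) (e j) : ℤ)).det
      = ∑ σ : Equiv.Perm (Fin r), ((Equiv.Perm.sign σ : ℤˣ) : ℤ) * ((F σ).card : ℤ) := by
    rw [← Matrix.det_transpose, Matrix.det_apply]
    refine Finset.sum_congr rfl fun σ _ => ?_
    have hprod : ∏ i,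
        (Matrix.of fun i j : Fin r => (pathCount R (s i) (e j) : ℤ)).transpose (σ i) i
        = ((F σ).card : ℤ) := by
      simp only [hFdef, Fintype.card_piFinset]
      push_cast
      refine Finset.prod_congr rfl fun i _ => ?_
      rw [Matrix.transpose_apply, Matrix.of_apply, hcount]
    rw [hprod, Units.smul_def, smul_eq_mul]
  rw [hdet]
  set C : Equiv.Perm (Fin r) → Finset (Fin r → List V) :=
    fun σ => (F σ).filter (fun P => ¬ Disj P) with hCdef
  have hsplit : ∀ σ : Equiv.Perm (Fin r),
      ((F σ).card : ℤ) = (((F σ).filter Disj).card : ℤ) + ((C σ).card : ℤ) := fun σ => by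
    rw [hCdef, ← Nat.cast_add, Finset.card_filter_add_card_filter_not]
  have hsum : ∑ σ : Equiv.Perm (Fin r), ((Equiv.Perm.sign σ : ℤˣ) : ℤ) * ((F σ).card : ℤ)
      = (∑ σ : Equiv.Perm (Fin r), ((Equiv.Perm.sign σ : ℤˣ) : ℤ) * (((F σ).filter Disj).card : ℤ))
        + ∑ σ : Equiv.Perm (Fin r), ((Equiv.Perm.sign σ : ℤˣ) : ℤ) * ((C σ).card : ℤ) := by
    rw [← Finset.sum_add_distrib]
    refine Finset.sum_congr rfl fun σ _ => ?_
    rw [hsplit σ, mul_add]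
  rw [hsum]
  -- the diagonal part
  have h1 : ∑ σ : Equiv.Perm (Fin r), ((Equiv.Perm.sign σ : ℤˣ) : ℤ) * (((F σ).filter Disj).card : ℤ)
      = ((((F 1).filter Disj).card : ℕ) : ℤ) := by
    rw [Finset.sum_eq_single (1 : Equiv.Perm (Fin r))]
    · simp
    · intro σ _ hσ
      have hempty : (F σ).filter Disj = ∅ := by
        rw [Finset.eq_empty_iff_forall_notMem]
        intro P hP
        rw [Finset.mem_filter] at hP
        exact hσ (hcompat P σ ((hFmem σ P).mp hP.1) hP.2)
      rw [hempty]
      simp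
    · simp
  have h2 : (Nat.card {P : Fin r → List V //
        (∀ i, IsPath R (s i) (e i) (P i)) ∧
        (∀ i j, i ≠ j → ∀ v, v ∈ P i → v ∉ P j)} : ℤ)
      = ((((F 1).filter Disj).card : ℕ) : ℤ) := by
    congr 1
    rw [Nat.card_congr (Equiv.subtypeEquivRight (q := fun P => P ∈ (F 1).filter Disj)
      fun P => ?_), Nat.card_eq_finsetCard]
    simp only [Finset.mem_filter, hFmem, hDisjdef, Equiv.Perm.one_apply]
  -- the crossing part vanishes
  have h3 : ∑ σ : Equiv.Perm (Fin r), ((Equiv.Perm.sign σ : ℤˣ) : ℤ) * ((C σ).card : ℤ) = 0 := by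
    have hconst : ∀ σ : Equiv.Perm (Fin r),
        ((Equiv.Perm.sign σ : ℤˣ) : ℤ) * ((C σ).card : ℤ)
          = ∑ _P ∈ C σ, ((Equiv.Perm.sign σ : ℤˣ) : ℤ) := fun σ => by
      rw [Finset.sum_const, nsmul_eq_mul, mul_comm]
    simp only [hconst]
    rw [← Finset.sum_sigma Finset.univ C
      (fun x => ((Equiv.Perm.sign x.1 : ℤˣ) : ℤ))]
    -- extract crossing data from membership
    have hx : ∀ a : Σ _ : Equiv.Perm (Fin r), (Fin r → List V),
        a ∈ Finset.univ.sigma C → ∃ i, Cross a.2 i := by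
      intro a ha
      rw [Finset.mem_sigma, hCdef, Finset.mem_filter] at ha
      exact (hDisjNeg a.2).mp ha.2.2
    have hpaths : ∀ a : Σ _ : Equiv.Perm (Fin r), (Fin r → List V),
        a ∈ Finset.univ.sigma C → ∀ i, IsPath R (s i) (e (a.1 i)) (a.2 i) := by
      intro a ha
      rw [Finset.mem_sigma, hCdef, Finset.mem_filter] at ha
      exact (hFmem a.1 a.2).mp ha.2.1
    refine Finset.sum_involution
      (fun a ha => ⟨a.1 * Equiv.swap (i0 a.2 (hx a ha)) (j0 a.2 (hx a ha)),
        swapP a.2 (hx a ha)⟩) ?_ ?_ ?_ ?_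
    · intro a ha
      simp only [Equiv.Perm.sign_mul, Equiv.Perm.sign_swap (i0_lt_j0 a.2 (hx a ha)).ne]
      simp only [Units.val_mul, Units.val_neg, Units.val_one]
      push_cast
      ring
    · intro a ha _
      intro hc
      have h1st : a.1 * Equiv.swap (i0 a.2 (hx a ha)) (j0 a.2 (hx a ha)) = a.1 :=
        congrArg Sigma.fst hc
    
      have : Equiv.swap (i0 a.2 (hx a ha)) (j0 a.2 (hx a ha)) = 1 :=
        mul_eq_left.mp h1st
      have := congrArg (fun τ : Equiv.Perm (Fin r) => τ (i0 a.2 (hx a ha))) this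
      simp [Equiv.swap_apply_left] at this
      exact (i0_lt_j0 a.2 (hx a ha)).ne this.symm
    · intro a ha
      rw [Finset.mem_sigma]
      refine ⟨Finset.mem_univ _, ?_⟩
      rw [hCdef, Finset.mem_filter]
      constructor
      · rw [hFmem]
        exact isPath_swapP a.2 (hx a ha) (hpaths a ha)
      · exact (hDisjNeg _).mpr ⟨i0 a.2 (hx a ha), cross_swapP a.2 (hx a ha)⟩
    · intro a ha
      dsimp only
      have hnd : (a.2 (i0 a.2 (hx a ha))).Nodup :=
        isPath_nodup hacyclic (hpaths a ha (i0 a.2 (hx a ha)))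
      refine Sigma.ext ?_ (heq_of_eq ?_)
      · show a.1 * Equiv.swap (i0 a.2 (hx a ha)) (j0 a.2 (hx a ha))
            * Equiv.swap _ _ = a.1
        rw [i0_swap a.2 (hx a ha) _, j0_swap a.2 (hx a ha) _ hnd,
          mul_assoc, Equiv.swap_mul_self, mul_one]
      · show swapP (swapP a.2 (hx a ha)) _ = a.2
        exact swapP_swapP a.2 (hx a ha) _ hnd
  rw [h1, h3, add_zero, h2]
end
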